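/- For all q, n ≥ 1, c̃_q(n) = φ*(q) · μ*(q/(n,q)_{**}) / φ*(q/(n,q)_{**}), where (n,q)_{**} is the greatest common unitary divisor of n and q. -/

import Mathlib

def uDivisors (n : ℕ) : Finset ℕ := n.divisors.filter (fun d => Nat.gcd d (n / d) = 1)

def mustar (n : ℕ) : ℤ := (-1) ^ n.primeFactors.card

def gcud (n q : ℕ) : ℕ := (uDivisors n ∩ uDivisors q).sup id

def ctilde (q n : ℕ) : ℤ := ∑ d ∈ uDivisors (gcud n q), (d : ℤ) * mustar (q / d)

/-- The unitary Euler function φ*(n) = Π_{p^ν ∥ n} (p^ν − 1). -/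
def phiStar (n : ℕ) : ℕ := ∏ p ∈ n.primeFactors, (p ^ n.factorization p - 1)

open Finset

lemma mem_uDivisors {d m : ℕ} :
    d ∈ uDivisors m ↔ (d ∣ m ∧ m ≠ 0) ∧ Nat.gcd d (m / d) = 1 := by
  simp [uDivisors, Nat.mem_divisors]

lemma mustar_mul {a b : ℕ} (ha : a ≠ 0) (hb : b ≠ 0) (hab : Nat.Coprime a b) :
    mustar (a * b) = mustar a * mustar b := by
  rw [mustar, mustar, mustar, Nat.primeFactors_mul ha hb,
    Finset.card_union_of_disjoint hab.disjoint_primeFactors, pow_add]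

lemma phiStar_mul {a b : ℕ} (ha : a ≠ 0) (hb : b ≠ 0) (hab : Nat.Coprime a b) :
    phiStar (a * b) = phiStar a * phiStar b := by
  have hd := hab.disjoint_primeFactors
  rw [phiStar, Nat.primeFactors_mul ha hb, Finset.prod_union hd, phiStar, phiStar]
  congr 1
  · refine Finset.prod_congr rfl fun p hp => ?_
    have hpb : b.factorization p = 0 := Finsupp.notMem_support_iff.mp
      (by rw [Nat.support_factorization]; exact Finset.disjoint_left.mp hd hp)
    rw [Nat.factorization_mul ha hb, Finsupp.add_apply, hpb, add_zero]
  · refine Finset.prod_congr rfl fun p hp => ?_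
    have hpa : a.factorization p = 0 := Finsupp.notMem_support_iff.mp
      (by rw [Nat.support_factorization]; exact Finset.disjoint_right.mp hd hp)
    rw [Nat.factorization_mul ha hb, Finsupp.add_apply, hpa, zero_add]

lemma phiStar_pos {m : ℕ} (hm : m ≠ 0) : 0 < phiStar m := by
  refine Finset.prod_pos fun p hp => ?_
  have hp' : p.Prime := Nat.prime_of_mem_primeFactors hp
  have hν : 1 ≤ m.factorization p := (Nat.Prime.factorization_pos_of_dvd hp'
    hm (Nat.dvd_of_mem_primeFactors hp))
  have : 2 ≤ p ^ m.factorization p := by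
    calc 2 ≤ p := hp'.two_le
    _ = p ^ 1 := (pow_one p).symm
    _ ≤ p ^ m.factorization p := Nat.pow_le_pow_right hp'.pos hν
  omega

/-- The unitary divisor of `m` supported on the prime set `S`. -/
def uD (m : ℕ) (S : Finset ℕ) : ℕ := ∏ p ∈ S, p ^ m.factorization p

lemma uD_factorization {m : ℕ} {S : Finset ℕ} (hS : S ⊆ m.primeFactors) (r : ℕ) :
    (uD m S).factorization r = if r ∈ S then m.factorization r else 0 := by
  have hne : ∀ p ∈ S, p ^ m.factorization p ≠ 0 := fun p hp =>
    pow_ne_zero _ (Nat.prime_of_mem_primeFactors (hS hp)).pos.ne'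
  rw [uD, Nat.factorization_prod hne]
  rw [Finsupp.finset_sum_apply]
  have : ∀ p ∈ S, (p ^ m.factorization p).factorization r
      = if p = r then m.factorization p else 0 := by
    intro p hp
    rw [(Nat.prime_of_mem_primeFactors (hS hp)).factorization_pow, Finsupp.single_apply]
  rw [Finset.sum_congr rfl this]
  simp [Finset.sum_ite_eq]

lemma uD_primeFactors {m : ℕ} {S : Finset ℕ} (hS : S ⊆ m.primeFactors) :
    (uD m S).primeFactors = S := by
  ext r
  rw [← Nat.support_factorization, Finsupp.mem_support_iff, uD_factorization hS]
  constructor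
  · intro h
    by_contra hr
    simp [hr] at h
  · intro hr
    have : m.factorization r ≠ 0 := by
      have := hS hr
      rwa [← Nat.support_factorization, Finsupp.mem_support_iff] at this
    simpa [hr] using this

lemma uD_ne_zero {m : ℕ} {S : Finset ℕ} (hS : S ⊆ m.primeFactors) : uD m S ≠ 0 :=
  Finset.prod_ne_zero_iff.mpr fun p hp =>
    pow_ne_zero _ (Nat.prime_of_mem_primeFactors (hS hp)).pos.ne'

lemma uD_primeFactors_self {m : ℕ} (hm : m ≠ 0) : uD m m.primeFactors = m := by
  conv_rhs => rw [← Nat.factorization_prod_pow_eq_self hm]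
  rfl

lemma uD_mul_sdiff {m : ℕ} {S : Finset ℕ} (hS : S ⊆ m.primeFactors) (hm : m ≠ 0) :
    uD m S * uD m (m.primeFactors \ S) = m := by
  rw [uD, uD, ← Finset.prod_union (Finset.disjoint_sdiff),
    Finset.union_sdiff_of_subset hS]
  exact uD_primeFactors_self hm

lemma uD_coprime_sdiff {m : ℕ} {S : Finset ℕ} (hS : S ⊆ m.primeFactors) :
    Nat.Coprime (uD m S) (uD m (m.primeFactors \ S)) := by
  have h1 := uD_ne_zero hS
  have h2 := uD_ne_zero (Finset.sdiff_subset (s := m.primeFactors) (t := S))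
  rw [← Nat.disjoint_primeFactors h1 h2, uD_primeFactors hS,
    uD_primeFactors (Finset.sdiff_subset)]
  exact Finset.disjoint_sdiff

lemma sum_uDivisors_eq_phiStar (m : ℕ) (hm : m ≠ 0) :
    ∑ d ∈ uDivisors m, (d : ℤ) * mustar (m / d) = (phiStar m : ℤ) := by
  have key : ∀ S ∈ m.primeFactors.powerset, m / uD m S = uD m (m.primeFactors \ S) := by
    intro S hS
    rw [Finset.mem_powerset] at hS
    exact Nat.div_eq_of_eq_mul_left (Nat.pos_of_ne_zero (uD_ne_zero hS))
      (by rw [mul_comm]; exact (uD_mul_sdiff hS hm).symm)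
  have hsum : ∑ d ∈ uDivisors m, (d : ℤ) * mustar (m / d)
      = ∑ S ∈ m.primeFactors.powerset,
          (∏ p ∈ S, (p : ℤ) ^ m.factorization p) * (-1) ^ (m.primeFactors \ S).card := by
    refine Finset.sum_nbij' (fun d => d.primeFactors) (fun S => uD m S) ?_ ?_ ?_ ?_ ?_
    · -- forward membership
      intro d hd
      rw [mem_uDivisors] at hd
      exact Finset.mem_powerset.mpr (Nat.primeFactors_mono hd.1.1 hm)
    · -- backward membership
      intro S hS
      rw [Finset.mem_powerset] at hS
      rw [mem_uDivisors]
      refine ⟨⟨⟨_, (uD_mul_sdiff hS hm).symm⟩, hm⟩, ?_⟩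
      rw [key S (Finset.mem_powerset.mpr hS)]
      exact uD_coprime_sdiff hS
    · -- left inverse : uD m d.primeFactors = d
      intro d hd
      rw [mem_uDivisors] at hd
      obtain ⟨⟨hdvd, _⟩, hgcd⟩ := hd
      have hd0 : d ≠ 0 := by
        rintro rfl
        simp at hdvd
        exact hm hdvd
      have hmd0 : m / d ≠ 0 := by
        have := Nat.div_pos (Nat.le_of_dvd (Nat.pos_of_ne_zero hm) hdvd)
          (Nat.pos_of_ne_zero hd0)
        omega
      have hfac : ∀ p ∈ d.primeFactors, m.factorization p = d.factorization p := by
        intro p hp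
        have hpd : p ∣ d := Nat.dvd_of_mem_primeFactors hp
        have hpp : p.Prime := Nat.prime_of_mem_primeFactors hp
        have hnd : ¬ p ∣ (m / d) := by
          intro hpmd
          have : p ∣ Nat.gcd d (m / d) := Nat.dvd_gcd hpd hpmd
          rw [hgcd] at this
          exact hpp.ne_one (Nat.dvd_one.mp this)
        have : m = d * (m / d) := (Nat.mul_div_cancel' hdvd).symm
        rw [this, Nat.factorization_mul hd0 hmd0, Finsupp.add_apply,
          Nat.factorization_eq_zero_of_not_dvd hnd, add_zero]
      calc uD m d.primeFactors = ∏ p ∈ d.primeFactors, p ^ d.factorization p := by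
            exact Finset.prod_congr rfl fun p hp => by rw [hfac p hp]
        _ = d := uD_primeFactors_self hd0
    · -- right inverse
      intro S hS
      rw [Finset.mem_powerset] at hS
      exact uD_primeFactors hS
    · -- values agree
      intro d hd
      rw [mem_uDivisors] at hd
      obtain ⟨⟨hdvd, _⟩, hgcd⟩ := hd
      have hd0 : d ≠ 0 := by
        rintro rfl
        simp at hdvd
        exact hm hdvd
      have hP : d.primeFactors ∈ m.primeFactors.powerset :=
        Finset.mem_powerset.mpr (Nat.primeFactors_mono hdvd hm)
      have hPsub := Finset.mem_powerset.mp hP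
      -- reuse left inverse computation
      have hmd0 : m / d ≠ 0 := by
        have := Nat.div_pos (Nat.le_of_dvd (Nat.pos_of_ne_zero hm) hdvd)
          (Nat.pos_of_ne_zero hd0)
        omega
      have hfac : ∀ p ∈ d.primeFactors, m.factorization p = d.factorization p := by
        intro p hp
        have hpd : p ∣ d := Nat.dvd_of_mem_primeFactors hp
        have hpp : p.Prime := Nat.prime_of_mem_primeFactors hp
        have hnd : ¬ p ∣ (m / d) := by
          intro hpmd
          have : p ∣ Nat.gcd d (m / d) := Nat.dvd_gcd hpd hpmd
          rw [hgcd] at this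
          exact hpp.ne_one (Nat.dvd_one.mp this)
        have : m = d * (m / d) := (Nat.mul_div_cancel' hdvd).symm
        rw [this, Nat.factorization_mul hd0 hmd0, Finsupp.add_apply,
          Nat.factorization_eq_zero_of_not_dvd hnd, add_zero]
      have huDd : uD m d.primeFactors = d := by
        calc uD m d.primeFactors = ∏ p ∈ d.primeFactors, p ^ d.factorization p :=
            Finset.prod_congr rfl fun p hp => by rw [hfac p hp]
          _ = d := uD_primeFactors_self hd0
      have hdiv : m / d = uD m (m.primeFactors \ d.primeFactors) := by
        conv_lhs => rw [← huDd]
        exact key _ hP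
      rw [hdiv]
      have hmust : mustar (uD m (m.primeFactors \ d.primeFactors))
          = (-1) ^ (m.primeFactors \ d.primeFactors).card := by
        rw [mustar, uD_primeFactors (Finset.sdiff_subset)]
      rw [hmust]
      congr 1
      have hcast : ((uD m d.primeFactors : ℕ) : ℤ)
          = ∏ p ∈ d.primeFactors, (p : ℤ) ^ m.factorization p := by
        rw [uD]; push_cast; rfl
      rw [← hcast, huDd]
  rw [hsum]
  have hprod : ∑ S ∈ m.primeFactors.powerset,
      (∏ p ∈ S, (p : ℤ) ^ m.factorization p) * (-1) ^ (m.primeFactors \ S).card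
      = ∏ p ∈ m.primeFactors, ((p : ℤ) ^ m.factorization p + (-1)) := by
    rw [Finset.prod_add]
    refine Finset.sum_congr rfl fun S hS => ?_
    rw [Finset.prod_const]
  rw [hprod, phiStar]
  push_cast
  refine Finset.prod_congr rfl fun p hp => ?_
  have hp' := Nat.prime_of_mem_primeFactors hp
  have : 1 ≤ p ^ m.factorization p := Nat.one_le_pow _ _ hp'.pos
  push_cast [Nat.cast_sub this]
  ring

theorem ctilde_holder (q n : ℕ) (hq : 0 < q) (hn : 0 < n) :
    (ctilde q n : ℚ) =
      (phiStar q : ℚ) * (mustar (q / gcud n q) : ℚ) / (phiStar (q / gcud n q) : ℚ) := by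
  -- the gcud is a common unitary divisor
  have hne : ((uDivisors n ∩ uDivisors q)).Nonempty := by
    refine ⟨1, Finset.mem_inter.mpr ⟨?_, ?_⟩⟩ <;>
      · rw [mem_uDivisors]
        simp [Nat.gcd_one_left]
        omega
  obtain ⟨b, hb, hbe⟩ := Finset.exists_mem_eq_sup _ hne id
  have hg : gcud n q ∈ uDivisors n ∩ uDivisors q := by
    rw [gcud, hbe]; exact hb
  set g := gcud n q with hgdef
  have hgq : g ∈ uDivisors q := (Finset.mem_inter.mp hg).2
  rw [mem_uDivisors] at hgq
  obtain ⟨⟨hgdvd, hq0⟩, hgcd⟩ := hgq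
  have hg0 : g ≠ 0 := by
    rintro h
    rw [h] at hgdvd hgcd
    simp at hgcd
  set h := q / g with hhdef
  have hqgh : g * h = q := Nat.mul_div_cancel' hgdvd
  have hh0 : h ≠ 0 := by
    rintro h0
    rw [h0, mul_zero] at hqgh
    omega
  have hcop : Nat.Coprime g h := hgcd
  -- split the sum
  have hsplit : ctilde q n = (∑ d ∈ uDivisors g, (d : ℤ) * mustar (g / d)) * mustar h := by
    rw [ctilde, ← hgdef, Finset.sum_mul]
    refine Finset.sum_congr rfl fun d hd => ?_
    rw [mem_uDivisors] at hd
    obtain ⟨⟨hddvd, _⟩, hdgcd⟩ := hd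
    have hd0 : d ≠ 0 := by
      rintro rfl
      simp at hddvd
      exact hg0 hddvd
    have hgd0 : g / d ≠ 0 := by
      have := Nat.div_pos (Nat.le_of_dvd (Nat.pos_of_ne_zero hg0) hddvd)
        (Nat.pos_of_ne_zero hd0)
      omega
    have hqd : q / d = (g / d) * h := by
      have : q = d * ((g / d) * h) := by
        rw [← mul_assoc, Nat.mul_div_cancel' hddvd, hqgh]
      rw [this, Nat.mul_div_cancel_left _ (Nat.pos_of_ne_zero hd0)]
    rw [hqd, mustar_mul hgd0 hh0 (Nat.Coprime.coprime_dvd_left (Nat.div_dvd_of_dvd hddvd) hcop),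
      mul_assoc]
  rw [hsplit, sum_uDivisors_eq_phiStar g hg0]
  have hphi : phiStar q = phiStar g * phiStar h := by
    rw [← hqgh]; exact phiStar_mul hg0 hh0 hcop
  have hphih : (phiStar h : ℚ) ≠ 0 := by
    exact_mod_cast (phiStar_pos hh0).ne'
  rw [hphi]
  push_cast
  field_simp
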